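/- Let A ⊆ B(X) be an abelian, unital, strongly closed subalgebra of split strict multiplicity p, identified with the algebra {T_a : a ∈ A} acting on X = ⊕ⱼ A/Iⱼ. For every T ∈ algLat(A) there exists a₀ ∈ A such that (T − T_{a₀})(x) ∈ ⊕ⱼ Rⱼ for every x ∈ X, where Rⱼ is the radical of A/Iⱼ (the intersection of all maximal ideals of A/Iⱼ, viewed as a subspace of A/Iⱼ). -/

import Mathlib

set_option synthInstance.maxHeartbeats 1000000
set_option maxHeartbeats 1000000

/-- The annihilator ideal `Iⱼ = {a ∈ A : a xⱼ = 0}` of a vector. -/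
def annIdeal {X : Type*} [NormedAddCommGroup X] [NormedSpace ℂ X]
    (A : Subalgebra ℂ (X →L[ℂ] X)) (x : X) : Ideal ↥A where
  carrier := {a | (a : X →L[ℂ] X) x = 0}
  add_mem' := fun {a b} ha hb => by
    simp only [Set.mem_setOf_eq] at *
    rw [Subalgebra.coe_add, ContinuousLinearMap.add_apply, ha, hb, add_zero]
  zero_mem' := by simp
  smul_mem' := fun c a ha => by
    simp only [Set.mem_setOf_eq, smul_eq_mul] at *
    rw [Subalgebra.coe_mul, ContinuousLinearMap.mul_apply, ha, map_zero]

/-- `c ∈ A` maps into the radical of `A/Iⱼ`, i.e. `c` lies in every maximal ideal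
of `A` containing `Iⱼ`. -/
def inRadical {X : Type*} [NormedAddCommGroup X] [NormedSpace ℂ X]
    (A : Subalgebra ℂ (X →L[ℂ] X)) (x : X) (c : ↥A) : Prop :=
  ∀ M : Ideal ↥A, M.IsMaximal → annIdeal A x ≤ M → c ∈ M

set_option maxHeartbeats 4000000

open Filter Topology

lemma exists_char {X : Type*} [NormedAddCommGroup X] [NormedSpace ℂ X] [CompleteSpace X]
    (A : Subalgebra ℂ (X →L[ℂ] X)) (hAc : IsClosed (A : Set (X →L[ℂ] X)))
    (hcomm : ∀ a ∈ A, ∀ b ∈ A, a * b = b * a)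
    (M : Ideal ↥A) (hM : M.IsMaximal) :
    ∃ χ : ↥A →L[ℂ] ℂ, χ 1 = 1 ∧ (∀ a b : ↥A, χ (a * b) = χ a * χ b) ∧
      (∀ a : ↥A, a ∈ M ↔ χ a = 0) := by
  letI : NormedCommRing ↥A :=
    { (inferInstance : NormedRing ↥A) with
      mul_comm := fun a b => Subtype.ext (hcomm a a.2 b b.2) }
  haveI : CompleteSpace ↥A := hAc.completeSpace_coe
  haveI := hM
  set φ := M.toCharacterSpace with hφ
  refine ⟨{ toFun := ⇑φ, map_add' := map_add φ,
            map_smul' := fun c a => by simp [map_smul φ c a],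
            cont := map_continuous φ }, ?_, ?_, ?_⟩
  · simp [map_one φ]
  · exact fun a b => map_mul φ a b
  · intro a
    constructor
    · exact fun ha => M.toCharacterSpace_apply_eq_zero_of_mem ha
    · intro h0
      by_contra ha
      obtain ⟨b, c, hc, hbc⟩ := hM.exists_inv ha
      have h1 : φ (b * a + c) = 1 := by rw [hbc]; simp [map_one φ]
      rw [map_add, map_mul] at h1
      rw [show φ a = 0 from h0, mul_zero, zero_add,
        M.toCharacterSpace_apply_eq_zero_of_mem hc] at h1
      exact zero_ne_one h1


/-- Let `A ⊆ B(X)` be an abelian, unital, strongly closed operator algebra of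
split strict multiplicity `p`. For every `T ∈ algLat A` there is `a₀ ∈ A` with
`(T - T_{a₀}) x ∈ ⊕ⱼ Rⱼ` for all `x`, where `Rⱼ` is the radical of `A/Iⱼ`;
under the identification `X ≅ ⊕ⱼ A/Iⱼ` this means `T y - a₀ y = ∑ⱼ cⱼ xⱼ` with
`φⱼ(cⱼ) ∈ Rⱼ`. -/
theorem stmt7 {X : Type*} [NormedAddCommGroup X] [NormedSpace ℂ X] [CompleteSpace X]
    (A : Subalgebra ℂ (X →L[ℂ] X))
    (hSOT : ∀ T : X →L[ℂ] X,
      (T : X → X) ∈ closure ((fun a : X →L[ℂ] X => (a : X → X)) '' (A : Set (X →L[ℂ] X)))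
      → T ∈ A)
    (hcomm : ∀ a ∈ A, ∀ b ∈ A, a * b = b * a)
    (p : ℕ) (x : Fin p → X)
    (hc : ∀ j, IsClosed {y : X | ∃ a ∈ A, a (x j) = y})
    (hspan : ∀ y : X, ∃ f : Fin p → (X →L[ℂ] X), (∀ j, f j ∈ A) ∧ y = ∑ j, f j (x j))
    (hind : ∀ f : Fin p → (X →L[ℂ] X), (∀ j, f j ∈ A) →
      (∑ j, f j (x j)) = 0 → ∀ j, f j (x j) = 0)
    (T : X →L[ℂ] X)
    (hT : ∀ K : Submodule ℂ X, IsClosed (K : Set X) →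
      (∀ a ∈ A, ∀ y ∈ K, a y ∈ K) → ∀ y ∈ K, T y ∈ K) :
    ∃ a₀ ∈ A, ∀ y : X, ∃ c : Fin p → ↥A,
      (∀ j, inRadical A (x j) (c j)) ∧
      T y - a₀ y = ∑ j, ((c j : X →L[ℂ] X)) (x j) := by
  classical
  -- A is norm closed
  have hcont : Continuous fun a : X →L[ℂ] X => (a : X → X) :=
    continuous_pi fun y => (ContinuousLinearMap.apply ℂ X y).continuous
  have hAc : IsClosed (A : Set (X →L[ℂ] X)) := by
    refine isClosed_of_closure_subset fun T' hT' => hSOT T' ?_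
    exact map_mem_closure hcont hT' fun a ha => Set.mem_image_of_mem _ ha
  haveI : CompleteSpace ↥A := hAc.completeSpace_coe
  -- inclusion and evaluation maps
  let ι : ↥A →L[ℂ] (X →L[ℂ] X) :=
    { toFun := fun a => (a : X →L[ℂ] X)
      map_add' := fun _ _ => rfl
      map_smul' := fun _ _ => rfl
      cont := continuous_subtype_val }
  let Q : X → (↥A →L[ℂ] X) := fun w => (ContinuousLinearMap.apply ℂ X w).comp ι
  have hQ : ∀ w (a : ↥A), Q w a = (a : X →L[ℂ] X) w := fun _ _ => rfl
  -- the closed subspaces S j = A x_j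
  let S : Fin p → Submodule ℂ X := fun j => LinearMap.range (Q (x j) : ↥A →ₗ[ℂ] X)
  have hSmem : ∀ j (y : X), y ∈ S j ↔ ∃ a : ↥A, (a : X →L[ℂ] X) (x j) = y := by
    intro j y; exact LinearMap.mem_range
  have hScl : ∀ j, IsClosed (S j : Set X) := by
    intro j
    have : (S j : Set X) = {y : X | ∃ a ∈ A, a (x j) = y} := by
      ext y
      simp only [SetLike.mem_coe, hSmem, Set.mem_setOf_eq]
      constructor
      · rintro ⟨a, rfl⟩; exact ⟨a, a.2, rfl⟩
      · rintro ⟨a, ha, rfl⟩; exact ⟨⟨a, ha⟩, rfl⟩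
    rw [this]; exact hc j
  haveI hScomp : ∀ j, CompleteSpace ↥(S j) := fun j => (hScl j).completeSpace_coe
  have hSinv : ∀ j, ∀ a ∈ A, ∀ y ∈ S j, a y ∈ S j := by
    intro j a ha y hy
    obtain ⟨b, rfl⟩ := (hSmem j y).mp hy
    refine (hSmem j _).mpr ⟨⟨a, ha⟩ * b, ?_⟩
    rfl
  -- cyclic subspaces
  let cyc : X → Submodule ℂ X := fun w => (LinearMap.range (Q w : ↥A →ₗ[ℂ] X)).topologicalClosure
  have hcyc_cl : ∀ w, IsClosed (cyc w : Set X) := fun w =>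
    Submodule.isClosed_topologicalClosure _
  have hcyc_self : ∀ w, w ∈ cyc w := fun w =>
    Submodule.le_topologicalClosure _ ⟨1, by simp [hQ]⟩
  have hrange_maps : ∀ w, ∀ a ∈ A, ∀ z ∈ (LinearMap.range (Q w : ↥A →ₗ[ℂ] X) : Set X),
      a z ∈ (LinearMap.range (Q w : ↥A →ₗ[ℂ] X) : Set X) := by
    rintro w a ha z ⟨b, rfl⟩
    exact ⟨⟨a, ha⟩ * b, rfl⟩
  have hcyc_inv : ∀ w, ∀ a ∈ A, ∀ y ∈ cyc w, a y ∈ cyc w := by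
    intro w a ha y hy
    have hy' : y ∈ closure (LinearMap.range (Q w : ↥A →ₗ[ℂ] X) : Set X) := by
      rwa [← Submodule.topologicalClosure_coe]
    have := map_mem_closure a.continuous hy' (hrange_maps w a ha)
    rw [← Submodule.topologicalClosure_coe] at this
    exact this
  have hTS : ∀ j, ∀ y ∈ S j, T y ∈ S j := fun j => hT (S j) (hScl j) (hSinv j)
  have hTcyc : ∀ w, T w ∈ cyc w := fun w => hT (cyc w) (hcyc_cl w) (hcyc_inv w) w (hcyc_self w)
  -- the direct-sum equivalence
  let Phi : (∀ j, ↥(S j)) →L[ℂ] X := ∑ j, (S j).subtypeL.comp (ContinuousLinearMap.proj j)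
  have hPhi : ∀ v, Phi v = ∑ j, ((v j : X)) := by
    intro v
    simp [Phi, ContinuousLinearMap.sum_apply]
  have hker : LinearMap.ker (Phi : (∀ j, ↥(S j)) →ₗ[ℂ] X) = ⊥ := by
    rw [Submodule.eq_bot_iff]
    intro v hv
    have hv' : ∑ j, ((v j : X)) = 0 := by rw [← hPhi]; exact hv
    have hg : ∀ j, ∃ a : ↥A, (a : X →L[ℂ] X) (x j) = (v j : X) := fun j => (hSmem j _).mp (v j).2
    choose g hg using hg
    have := hind (fun j => (g j : X →L[ℂ] X)) (fun j => (g j).2)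
      (by rw [show ∑ j, ((g j : X →L[ℂ] X)) (x j) = ∑ j, ((v j : X)) from
        Finset.sum_congr rfl fun j _ => hg j]; exact hv')
    funext j
    exact Subtype.ext (by rw [← hg j]; exact this j)
  have hrange : LinearMap.range (Phi : (∀ j, ↥(S j)) →ₗ[ℂ] X) = ⊤ := by
    rw [LinearMap.range_eq_top]
    intro y
    obtain ⟨f, hfA, hfy⟩ := hspan y
    refine ⟨fun j => ⟨f j (x j), (hSmem j _).mpr ⟨⟨f j, hfA j⟩, rfl⟩⟩, ?_⟩
    rw [ContinuousLinearMap.coe_coe, hPhi]; exact hfy.symm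
  let e := ContinuousLinearEquiv.ofBijective Phi hker hrange
  have he_apply : ∀ v, e v = Phi v := fun v =>
    congrFun (ContinuousLinearEquiv.coeFn_ofBijective Phi hker hrange) v
  -- T x_j lands in S j
  have hTxj : ∀ j, T (x j) ∈ S j := fun j => hTS j (x j) ((hSmem j _).mpr ⟨1, by simp⟩)
  -- the approximating sequence
  set xbar := ∑ j, x j with hxbar
  have hTx : T xbar ∈ closure (LinearMap.range (Q xbar : ↥A →ₗ[ℂ] X) : Set X) := by
    have := hTcyc xbar
    rwa [← Submodule.topologicalClosure_coe]
  obtain ⟨u, hu_mem, hu_tend⟩ := mem_closure_iff_seq_limit.mp hTx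
  choose b hb using fun n => hu_mem n
  -- component-wise convergence
  have hsymm_u : ∀ n, e.symm (u n) =
      fun j => (⟨(b n : X →L[ℂ] X) (x j), (hSmem j _).mpr ⟨b n, rfl⟩⟩ : ↥(S j)) := by
    intro n
    rw [ContinuousLinearEquiv.symm_apply_eq, ← hb n, he_apply, hPhi]
    show Q xbar (b n) = ∑ j, ((b n : X →L[ℂ] X)) (x j)
    rw [hQ, hxbar, map_sum]
  have hsymm_T : e.symm (T xbar) = fun j => (⟨T (x j), hTxj j⟩ : ↥(S j)) := by
    rw [ContinuousLinearEquiv.symm_apply_eq, he_apply, hPhi]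
    show T xbar = ∑ j, T (x j)
    rw [hxbar, map_sum]
  have hbxj : ∀ j, Tendsto (fun n => ((b n : X →L[ℂ] X)) (x j)) atTop (𝓝 (T (x j))) := by
    intro j
    have h1 : Tendsto (fun n => e.symm (u n)) atTop (𝓝 (e.symm (T xbar))) :=
      (e.symm.continuous.tendsto _).comp hu_tend
    have hc3 : Continuous fun v : (∀ k, ↥(S k)) => ((v j : X)) :=
      continuous_subtype_val.comp (continuous_apply j)
    have h3 : Tendsto (fun n => ((e.symm (u n)) j : X)) atTop (𝓝 ((e.symm (T xbar) j : X))) :=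
      (hc3.tendsto _).comp h1
    rw [hsymm_T] at h3
    exact h3.congr fun n => by rw [hsymm_u n]
  -- pointwise convergence everywhere
  choose f hfA hfy using hspan
  have hconv : ∀ y : X,
      Tendsto (fun n => ((b n : X →L[ℂ] X)) y) atTop (𝓝 (∑ j, f y j (T (x j)))) := by
    intro y
    have heq : ∀ n, ((b n : X →L[ℂ] X)) y = ∑ j, f y j (((b n : X →L[ℂ] X)) (x j)) := by
      intro n
      conv_lhs => rw [hfy y]
      rw [map_sum]
      refine Finset.sum_congr rfl fun j _ => ?_
      have hcj := hcomm (b n) (b n).2 (f y j) (hfA y j)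
      calc ((b n : X →L[ℂ] X)) (f y j (x j))
          = (((b n : X →L[ℂ] X)) * f y j) (x j) := rfl
        _ = (f y j * ((b n : X →L[ℂ] X))) (x j) := by rw [hcj]
        _ = f y j (((b n : X →L[ℂ] X)) (x j)) := rfl
    have hsum := tendsto_finset_sum (Finset.univ : Finset (Fin p))
      (fun j _ => ((f y j).continuous.tendsto _).comp (hbxj j))
    exact hsum.congr fun n => (heq n).symm
  -- the limit operator
  have htendF : Tendsto (fun n x' => ((b n : X →L[ℂ] X)) x') atTop
      (𝓝 fun y => ∑ j, f y j (T (x j))) :=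
    tendsto_pi_nhds.mpr hconv
  let a₀ : X →L[ℂ] X := continuousLinearMapOfTendsto (fun n => ((b n : X →L[ℂ] X))) htendF
  have ha₀fun : (a₀ : X → X) = fun y => ∑ j, f y j (T (x j)) := rfl
  have ha₀A : a₀ ∈ A := by
    apply hSOT
    rw [ha₀fun]
    exact mem_closure_of_tendsto htendF
      (Filter.Eventually.of_forall fun n => ⟨(b n : X →L[ℂ] X), (b n).2, rfl⟩)
  have ha₀y : ∀ y, a₀ y = ∑ j, f y j (T (x j)) := fun y => congrFun ha₀fun y
  -- final assembly
  refine ⟨a₀, ha₀A, fun y => ?_⟩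
  have hBex : ∀ j, ∃ Bj : ↥A, (Bj : X →L[ℂ] X) (x j) = T (f y j (x j)) := fun j =>
    (hSmem j _).mp (hTS j _ ((hSmem j _).mpr ⟨⟨f y j, hfA y j⟩, rfl⟩))
  choose B hB using hBex
  have hGex : ∀ j, ∃ Gj : ↥A, (Gj : X →L[ℂ] X) (x j) = T (x j) := fun j => (hSmem j _).mp (hTxj j)
  choose G hG using hGex
  refine ⟨fun j => B j - (⟨f y j, hfA y j⟩ : ↥A) * G j, fun j => ?_, ?_⟩
  · -- radical membership
    intro M hM hle
    obtain ⟨χ, hχ1, hχmul, hχmem⟩ := exists_char A hAc hcomm M hM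
    set fj : ↥A := ⟨f y j, hfA y j⟩ with hfj
    set lam : ℂ := χ fj with hlam
    set h : ↥A := fj - lam • 1 with hh
    have hχh : χ h = 0 := by
      rw [hh, map_sub, map_smul, hχ1]
      simp [hlam]
    -- the closed set N = {a x_j : χ a = 0}
    let qh : ↥A →L[ℂ] ↥(S j) := (Q (x j)).codRestrict (S j) (fun a => (hSmem j _).mpr ⟨a, rfl⟩)
    have hqs : Function.Surjective qh := by
      rintro ⟨z, hz⟩
      obtain ⟨a, ha⟩ := (hSmem j z).mp hz
      exact ⟨a, Subtype.ext ha⟩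
    have hopen : IsOpenMap qh := ContinuousLinearMap.isOpenMap qh hqs
    let C : Set ↥A := ⇑χ ⁻¹' {0}
    have hCcl : IsClosed C := isClosed_singleton.preimage χ.continuous
    have hsat : qh ⁻¹' (qh '' C) = C := by
      apply Set.Subset.antisymm
      · rintro a ⟨a', ha'C, ha'⟩
        have hval : (a' : X →L[ℂ] X) (x j) = (a : X →L[ℂ] X) (x j) :=
          congrArg Subtype.val ha'
        have hann : a - a' ∈ annIdeal A (x j) := by
          show ((a - a' : ↥A) : X →L[ℂ] X) (x j) = 0
          simp [hval]
        have hM0 : χ (a - a') = 0 := (hχmem _).mp (hle hann)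
        rw [map_sub, sub_eq_zero] at hM0
        show χ a = 0
        rw [hM0]
        exact ha'C
      · exact Set.subset_preimage_image _ _
    have himgcl : IsClosed (qh '' C) := by
      have hcompl : qh '' C = (qh '' Cᶜ)ᶜ := by
        apply Set.Subset.antisymm
        · rintro z ⟨a, haC, rfl⟩
          rintro ⟨a', ha'C, ha'⟩
          exact ha'C (by rw [← hsat]; exact ⟨a, haC, ha'.symm⟩)
        · intro z hz
          obtain ⟨a, rfl⟩ := hqs z
          by_cases haC : a ∈ C
          · exact ⟨a, haC, rfl⟩
          · exact absurd ⟨a, haC, rfl⟩ hz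
      rw [hcompl]
      exact (hopen _ hCcl.isOpen_compl).isClosed_compl
    have hNcl : IsClosed (Subtype.val '' (qh '' C) : Set X) :=
      ((hScl j).isClosedEmbedding_subtypeVal).isClosedMap _ himgcl
    -- T (h x_j) lies in N
    set w₀ : X := (h : X →L[ℂ] X) (x j) with hw₀
    have hsubN : (LinearMap.range (Q w₀ : ↥A →ₗ[ℂ] X) : Set X) ⊆ Subtype.val '' (qh '' C) := by
      rintro z ⟨a, rfl⟩
      refine ⟨qh (a * h), ⟨a * h, ?_, rfl⟩, ?_⟩
      · show χ (a * h) = 0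
        rw [hχmul, hχh, mul_zero]
      · rw [ContinuousLinearMap.coe_codRestrict_apply, hQ, ContinuousLinearMap.coe_coe, hQ, hw₀,
          MulMemClass.coe_mul, ContinuousLinearMap.mul_apply]
    have hTw₀ : T w₀ ∈ Subtype.val '' (qh '' C) := by
      have h1 : T w₀ ∈ closure (LinearMap.range (Q w₀ : ↥A →ₗ[ℂ] X) : Set X) := by
        have := hTcyc w₀
        rwa [← Submodule.topologicalClosure_coe]
      exact closure_minimal hsubN hNcl h1
    obtain ⟨z, ⟨d, hdC, rfl⟩, hzT⟩ := hTw₀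
    have hd : (d : X →L[ℂ] X) (x j) = T w₀ := by
      unfold qh at hzT
      rwa [ContinuousLinearMap.coe_codRestrict_apply, hQ] at hzT
    have hdχ : χ d = 0 := hdC
    -- combine: B j - (d + lam • G j) annihilates x j
    have hkey : ((B j - (d + lam • G j) : ↥A) : X →L[ℂ] X) (x j) = 0 := by
      have hfx : f y j (x j) = w₀ + lam • x j := by
        rw [hw₀, hh]
        show f y j (x j) = ((fj : X →L[ℂ] X) - lam • 1) (x j) + lam • x j
        simp [hfj]
      have hTfx : T (f y j (x j)) = T w₀ + lam • T (x j) := by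
        rw [hfx, map_add, map_smul]
      have : ((B j : X →L[ℂ] X)) (x j) = ((d + lam • G j : ↥A) : X →L[ℂ] X) (x j) := by
        rw [hB j, hTfx, ← hd, ← hG j]
        simp
      simp [sub_eq_zero, this]
    have hkeyM : (B j - (d + lam • G j) : ↥A) ∈ M := hle hkey
    have hχB : χ (B j) = lam * χ (G j) := by
      have := (hχmem _).mp hkeyM
      rw [map_sub, sub_eq_zero] at this
      rw [this, map_add, map_smul, hdχ]
      simp [smul_eq_mul]
    refine (hχmem _).mpr ?_
    rw [map_sub, hχB, hχmul]
    ring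
  · -- the sum identity
    have h1 : T y = ∑ j, T (f y j (x j)) := by
      conv_lhs => rw [hfy y]
      rw [map_sum]
    rw [h1, ha₀y y, ← Finset.sum_sub_distrib]
    refine Finset.sum_congr rfl fun j _ => ?_
    have hcval : (((B j - (⟨f y j, hfA y j⟩ : ↥A) * G j : ↥A)) : X →L[ℂ] X) (x j)
        = ((B j : X →L[ℂ] X)) (x j) - (f y j) (((G j : X →L[ℂ] X)) (x j)) := by
      simp
    rw [hcval, hB j, hG j]
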